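/- arXiv:1810.10298 — 4 statements merged into one kernel-verified Lean document; each statement's English description precedes it below -/
import Mathlib

section
/- Let (a_{ij}, b_j) and (â_{ij}, b̂_j) be two s-stage Runge-Kutta coefficient schemes that are symplectic conjugated, i.e., b_i â_{ij} + b̂_j a_{ji} = b_i b̂_j and b_j = b̂_j for all i,j. If (a_{ij}, b_j) satisfies a_{1j} = 0 for all j (hypothesis H1) and a_{sj} = b_j for all j (hypothesis H3) with all b_j nonzero, then â_{is} = 0 for all i and â_{i1} = b̂_1 for all i. -/
open Matrix BigOperators

/-- If symplectic conjugated schemes (A,b), (Â,b̂) satisfy H1 and H3 for A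
with nonzero weights, then Â satisfies H1' (â_{is} = 0) and H2' (â_{i1} = b̂_1). -/
theorem symplectic_conjugate_H1'_H2'
    (n : ℕ) (A Ahat : Matrix (Fin (n + 1)) (Fin (n + 1)) ℝ)
    (b bhat : Fin (n + 1) → ℝ)
    (hconj : ∀ i j, b i * Ahat i j + bhat j * A j i = b i * bhat j)
    (hbeq : ∀ j, b j = bhat j)
    (hH1 : ∀ j, A 0 j = 0)
    (hH3 : ∀ j, A (Fin.last n) j = b j)
    (hbne : ∀ j, b j ≠ 0) :
    (∀ i, Ahat i (Fin.last n) = 0) ∧ (∀ i, Ahat i 0 = bhat 0) := by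
  constructor
  · intro i
    have h := hconj i (Fin.last n)
    rw [hH3 i, ← hbeq (Fin.last n)] at h
    have : b i * Ahat i (Fin.last n) = 0 := by ring_nf; ring_nf at h; linarith
    exact (mul_eq_zero.mp this).resolve_left (hbne i)
  · intro i
    have h := hconj i 0
    rw [hH1 i, mul_zero, add_zero] at h
    exact mul_left_cancel₀ (hbne i) h
end

section
/- Under hypotheses H1, H2, H3 and simplifying assumption D(r), for 1 ≤ k ≤ r one has b C^k A⁻ A_1 = 0, where A_1 denotes the first column of A, C = diag(c), and A⁻ is the block pseudo-inverse of A. -/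
open Matrix BigOperators Finset

/-- Under H1, H2, H3 and D(r), for 1 ≤ k ≤ r one has b C^k A⁻ A_1 = 0,
where A_1 is the first column of A. -/
theorem bCk_Aminus_A1
    (n : ℕ) (A Aminus : Matrix (Fin (n + 2)) (Fin (n + 2)) ℝ)
    (b c : Fin (n + 2) → ℝ) (r : ℕ)
    (hc : ∀ i, c i = ∑ j, A i j)
    (hc1 : c 0 = 0)
    (hH1 : ∀ j, A 0 j = 0)
    (hAm_row : ∀ j, Aminus 0 j = 0)
    (hAm_col : ∀ i, Aminus i 0 = 0)
    (hAm_left : ∀ i j : Fin (n + 1),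
      ∑ k : Fin (n + 1), A i.succ k.succ * Aminus k.succ j.succ = if i = j then 1 else 0)
    (hAm_right : ∀ i j : Fin (n + 1),
      ∑ k : Fin (n + 1), Aminus i.succ k.succ * A k.succ j.succ = if i = j then 1 else 0)
    (hH3 : ∀ j, A (Fin.last (n + 1)) j = b j)
    (hD : ∀ k : ℕ, 1 ≤ k → k ≤ r → ∀ j,
      ∑ i, b i * c i ^ (k - 1) * A i j = b j * (1 - c j ^ k) / k) :
    ∀ k : ℕ, 1 ≤ k → k ≤ r →
      ∑ j, (∑ i, b i * c i ^ k * Aminus i j) * A j 0 = 0 := by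
  intro k hk1 hkr
  have hkne : (k : ℝ) ≠ 0 := by
    exact_mod_cast Nat.one_le_iff_ne_zero.mp hk1
  -- helper: A A⁻ A_1 = A_1 rowwise
  have helper : ∀ m : Fin (n + 2),
      ∑ j, (∑ i, A m i * Aminus i j) * A j 0 = A m 0 := by
    intro m
    induction m using Fin.cases with
    | zero =>
        simp [hH1]
    | succ p =>
        rw [Fin.sum_univ_succ]
        have h0 : (∑ i, A p.succ i * Aminus i 0) = 0 := by simp [hAm_col]
        rw [h0, zero_mul, zero_add]
        have hq : ∀ q : Fin (n + 1),
            (∑ i, A p.succ i * Aminus i q.succ) = if p = q then 1 else 0 := by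
          intro q
          rw [Fin.sum_univ_succ, hAm_row, mul_zero, zero_add, hAm_left]
        simp only [hq]
        simp [Finset.sum_ite_eq, ite_mul]
    -- end helper
  -- pointwise identity from D(k)
  have key : ∀ i, b i * c i ^ k = b i - k * ∑ m, b m * c m ^ (k - 1) * A m i := by
    intro i
    rw [hD k hk1 hkr i]
    field_simp
    ring
  simp only [key]
  have expand : ∀ j : Fin (n + 2),
      (∑ i, (b i - ↑k * ∑ m, b m * c m ^ (k - 1) * A m i) * Aminus i j) * A j 0
      = (∑ i, b i * Aminus i j) * A j 0
        - ↑k * ∑ m, b m * c m ^ (k - 1) *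
            ((∑ i, A m i * Aminus i j) * A j 0) := by
    intro j
    simp only [sub_mul, Finset.sum_sub_distrib]
    congr 1
    simp only [Finset.sum_mul, Finset.mul_sum]
    rw [Finset.sum_comm]
    apply Finset.sum_congr rfl
    intro m _
    apply Finset.sum_congr rfl
    intro i _
    ring
  simp only [expand]
  rw [Finset.sum_sub_distrib]
  have T1 : ∑ j, (∑ i, b i * Aminus i j) * A j 0 = b 0 := by
    have hb : ∀ i, b i = A (Fin.last (n + 1)) i := fun i => (hH3 i).symm
    simp only [hb]
    rw [helper (Fin.last (n + 1)), hH3]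
  have T2 : ∑ j, ↑k * ∑ m, b m * c m ^ (k - 1) * ((∑ i, A m i * Aminus i j) * A j 0)
      = b 0 := by
    rw [← Finset.mul_sum, Finset.sum_comm]
    simp only [← Finset.mul_sum]
    have hrw : ∀ m : Fin (n + 2), b m * c m ^ (k - 1) *
        ∑ j, (∑ i, A m i * Aminus i j) * A j 0 = b m * c m ^ (k - 1) * A m 0 :=
      fun m => by rw [helper m]
    rw [Finset.sum_congr rfl (fun m _ => hrw m)]
    rw [hD k hk1 hkr 0, hc1, zero_pow (Nat.one_le_iff_ne_zero.mp hk1)]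
    field_simp
    ring
  rw [T1, T2, sub_self]
end

section
/- Let (A,b) satisfy H1, H2, H3, D(r), and let (Â,b̂) satisfy the simplifying assumption D̂(r̂): ∑_i b̂_i c_i^{k−1} â_{ij} = b̂_j(1 − c_j^k)/k for k = 1,...,r̂, with b = b̂. Then for 1 ≤ k ≤ min(r, r̂), the reduced combination b C^{k−1}(Â_1 − Â A⁻ A_1) = 0, where Â_1 and A_1 are the first columns of Â and A respectively. -/
open Matrix BigOperators Finset

/-- With (A,b) satisfying H1, H2, H3, D(r) and (Â,b̂) satisfying D̂(r̂)
with b = b̂ and shared nodes, for 1 ≤ k ≤ min(r,r̂) the reduced combination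
b C^{k−1}(Â_1 − Â A⁻ A_1) vanishes. -/
theorem reduced_combination_one
    (n : ℕ) (A Ahat Aminus : Matrix (Fin (n + 2)) (Fin (n + 2)) ℝ)
    (b bhat c : Fin (n + 2) → ℝ) (r rhat : ℕ)
    (hc : ∀ i, c i = ∑ j, A i j)
    (hchat : ∀ i, c i = ∑ j, Ahat i j)
    (hbeq : ∀ j, b j = bhat j)
    (hc1 : c 0 = 0)
    (hH1 : ∀ j, A 0 j = 0)
    (hAm_row : ∀ j, Aminus 0 j = 0)
    (hAm_col : ∀ i, Aminus i 0 = 0)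
    (hAm_left : ∀ i j : Fin (n + 1),
      ∑ k : Fin (n + 1), A i.succ k.succ * Aminus k.succ j.succ = if i = j then 1 else 0)
    (hAm_right : ∀ i j : Fin (n + 1),
      ∑ k : Fin (n + 1), Aminus i.succ k.succ * A k.succ j.succ = if i = j then 1 else 0)
    (hH3 : ∀ j, A (Fin.last (n + 1)) j = b j)
    (hD : ∀ k : ℕ, 1 ≤ k → k ≤ r → ∀ j,
      ∑ i, b i * c i ^ (k - 1) * A i j = b j * (1 - c j ^ k) / k)
    (hDhat : ∀ k : ℕ, 1 ≤ k → k ≤ rhat → ∀ j,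
      ∑ i, bhat i * c i ^ (k - 1) * Ahat i j = bhat j * (1 - c j ^ k) / k) :
    ∀ k : ℕ, 1 ≤ k → k ≤ min r rhat →
      ∑ i, b i * c i ^ (k - 1) *
        (Ahat i 0 - ∑ j, ∑ l, Ahat i j * Aminus j l * A l 0) = 0 := by
  intro k hk1 hk2
  have hkr : k ≤ r := hk2.trans (min_le_left _ _)
  have hkrh : k ≤ rhat := hk2.trans (min_le_right _ _)
  set v : Fin (n+2) → ℝ := fun j => ∑ l, Aminus j l * A l 0 with hv
  have hAv : ∀ i, ∑ j, A i j * v j = A i 0 := by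
    intro i
    refine Fin.cases ?_ ?_ i
    · simp [hH1]
    · intro i
      rw [Fin.sum_univ_succ]
      have hv0 : v 0 = 0 := by simp [hv, hAm_row]
      rw [hv0, mul_zero, zero_add]
      have hvs : ∀ j : Fin (n+1), v j.succ
          = ∑ l : Fin (n+1), Aminus j.succ l.succ * A l.succ 0 := by
        intro j
        simp [hv, Fin.sum_univ_succ, hAm_col]
      calc ∑ j : Fin (n+1), A i.succ j.succ * v j.succ
          = ∑ l : Fin (n+1), (∑ j : Fin (n+1), A i.succ j.succ * Aminus j.succ l.succ)
              * A l.succ 0 := by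
            simp_rw [hvs, Finset.mul_sum, Finset.sum_mul]
            rw [Finset.sum_comm]
            simp [mul_assoc]
        _ = A i.succ 0 := by
            simp_rw [hAm_left]
            simp
  have key : ∀ j, ∑ i, b i * c i ^ (k-1) * Ahat i j
      = ∑ i, b i * c i ^ (k-1) * A i j := by
    intro j
    have h1 := hDhat k hk1 hkrh j
    have h2 := hD k hk1 hkr j
    simp only [← hbeq] at h1
    rw [h1, h2]
  have step1 : ∀ i, (∑ j, ∑ l, Ahat i j * Aminus j l * A l 0)
      = ∑ j, Ahat i j * v j := by
    intro i
    refine Finset.sum_congr rfl fun j _ => ?_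
    rw [hv, Finset.mul_sum]
    simp [mul_assoc]
  have main2 : ∑ i, b i * c i ^ (k-1) * (∑ j, ∑ l, Ahat i j * Aminus j l * A l 0)
      = ∑ i, b i * c i ^ (k-1) * Ahat i 0 := by
    simp_rw [step1]
    calc ∑ i, b i * c i ^ (k-1) * ∑ j, Ahat i j * v j
        = ∑ j, (∑ i, b i * c i ^ (k-1) * Ahat i j) * v j := by
          simp_rw [Finset.mul_sum, Finset.sum_mul]
          rw [Finset.sum_comm]
          simp [mul_assoc, mul_comm, mul_left_comm]
      _ = ∑ j, (∑ i, b i * c i ^ (k-1) * A i j) * v j := by simp_rw [key]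
      _ = ∑ i, b i * c i ^ (k-1) * ∑ j, A i j * v j := by
          simp_rw [Finset.mul_sum, Finset.sum_mul]
          rw [Finset.sum_comm]
          simp [mul_assoc, mul_comm, mul_left_comm]
      _ = ∑ i, b i * c i ^ (k-1) * A i 0 := by simp_rw [hAv]
      _ = b 0 * (1 - c 0 ^ k) / k := hD k hk1 hkr 0
      _ = ∑ i, b i * c i ^ (k-1) * Ahat i 0 := by
          have h1 := hDhat k hk1 hkrh 0
          simp only [← hbeq] at h1
          rw [h1]
  simp only [mul_sub, Finset.sum_sub_distrib]
  rw [main2, sub_self]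
end

section
/- If two compatible Runge-Kutta schemes (A,b) and (Â,b̂) with b = b̂ and all b_i ≠ 0 are symplectic conjugated, and (A,b) satisfies D(r) and B(r), then (Â,b̂) satisfies Ĉ(r): ∑_j â_{ij} c_j^{k−1} = c_i^k/k for k = 1,...,r. -/
open Matrix BigOperators Finset

/-- if (A,b) and (Â,b̂) are symplectic conjugated compatible schemes with
b = b̂, all bᵢ ≠ 0, and (A,b) satisfies D(r) and B(r), then (Â,b̂) satisfies Ĉ(r). -/
theorem conjugate_satisfies_Chat
    (s : ℕ) (A Ahat : Matrix (Fin s) (Fin s) ℝ) (b bhat c : Fin s → ℝ) (r : ℕ)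
    (hc : ∀ i, c i = ∑ j, A i j)
    (hchat : ∀ i, c i = ∑ j, Ahat i j)
    (hbeq : ∀ j, b j = bhat j)
    (hbne : ∀ i, b i ≠ 0)
    (hconj : ∀ i j, b i * Ahat i j + bhat j * A j i = b i * bhat j)
    (hD : ∀ k : ℕ, 1 ≤ k → k ≤ r → ∀ j,
      ∑ i, b i * c i ^ (k - 1) * A i j = b j * (1 - c j ^ k) / k)
    (hB : ∀ k : ℕ, 1 ≤ k → k ≤ r →
      ∑ i, b i * c i ^ (k - 1) = 1 / k) :
    ∀ k : ℕ, 1 ≤ k → k ≤ r → ∀ i,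
      ∑ j, Ahat i j * c j ^ (k - 1) = c i ^ k / k := by
  intro k hk1 hkr i
  apply mul_left_cancel₀ (hbne i)
  have key : ∀ j, b i * (Ahat i j * c j ^ (k - 1))
      = b j * c j ^ (k - 1) * b i - b j * c j ^ (k - 1) * A j i := by
    intro j
    have h := hconj i j
    rw [← hbeq j] at h
    linear_combination c j ^ (k - 1) * h
  calc b i * ∑ j, Ahat i j * c j ^ (k - 1)
      = ∑ j, (b j * c j ^ (k - 1) * b i - b j * c j ^ (k - 1) * A j i) := by
        rw [Finset.mul_sum]; exact Finset.sum_congr rfl fun j _ => key j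
    _ = (∑ j, b j * c j ^ (k - 1)) * b i - ∑ j, b j * c j ^ (k - 1) * A j i := by
        rw [Finset.sum_sub_distrib, Finset.sum_mul]
    _ = (1 / k) * b i - b i * (1 - c i ^ k) / k := by
        rw [hB k hk1 hkr, hD k hk1 hkr i]
    _ = b i * (c i ^ k / k) := by
        have hk0 : (k : ℝ) ≠ 0 := Nat.cast_ne_zero.mpr (by omega)
        field_simp; ring
end
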